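/- Let C be a weakly idempotent complete exact category and let C' be the full subcategory of objects X such that every morphism in C with target X is admissible. Then C', with the exact structure inherited from C, is an abelian category, and the inclusion functor C' → C is exact (every short exact sequence in C' is a conflation in C). In particular, C' is a wide subcategory of C. -/

import Mathlib

open CategoryTheory Category Limits

universe v u

/-- A Quillen exact structure on an additive category, following Bühler: a class of
kernel-cokernel pairs (conflations), closed under isomorphisms, containing the identities,
with inflations and deflations closed under composition, and admitting pushouts of
inflations along arbitrary morphisms and pullbacks of deflations along arbitrary morphisms. -/
structure ExactStructure (C : Type u) [Category.{v} C] [Preadditive C] [HasZeroObject C]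
    [HasBinaryBiproducts C] where
  /-- the class of conflations (admissible exact sequences) -/
  IsConflation : ∀ {X Y Z : C}, (X ⟶ Y) → (Y ⟶ Z) → Prop
  comp_zero : ∀ {X Y Z : C} {f : X ⟶ Y} {g : Y ⟶ Z}, IsConflation f g → f ≫ g = 0
  isKernel : ∀ {X Y Z : C} {f : X ⟶ Y} {g : Y ⟶ Z}, IsConflation f g →
    ∀ {W : C} (k : W ⟶ Y), k ≫ g = 0 → ∃! l : W ⟶ X, l ≫ f = k
  isCokernel : ∀ {X Y Z : C} {f : X ⟶ Y} {g : Y ⟶ Z}, IsConflation f g →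
    ∀ {W : C} (k : Y ⟶ W), f ≫ k = 0 → ∃! l : Z ⟶ W, g ≫ l = k
  conflation_iso : ∀ {X Y Z X' Y' Z' : C} {f : X ⟶ Y} {g : Y ⟶ Z}
    (eX : X ≅ X') (eY : Y ≅ Y') (eZ : Z ≅ Z') {f' : X' ⟶ Y'} {g' : Y' ⟶ Z'},
    IsConflation f g → f ≫ eY.hom = eX.hom ≫ f' → g ≫ eZ.hom = eY.hom ≫ g' →
    IsConflation f' g'
  id_inflation : ∀ X : C, ∃ (Z : C) (g : X ⟶ Z), IsConflation (𝟙 X) g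
  id_deflation : ∀ X : C, ∃ (Z : C) (f : Z ⟶ X), IsConflation f (𝟙 X)
  inflation_comp : ∀ {X Y Z : C} (f : X ⟶ Y) (g : Y ⟶ Z),
    (∃ (W : C) (p : Y ⟶ W), IsConflation f p) →
    (∃ (W : C) (p : Z ⟶ W), IsConflation g p) →
    ∃ (W : C) (p : Z ⟶ W), IsConflation (f ≫ g) p
  deflation_comp : ∀ {X Y Z : C} (f : X ⟶ Y) (g : Y ⟶ Z),
    (∃ (W : C) (i : W ⟶ X), IsConflation i f) →
    (∃ (W : C) (i : W ⟶ Y), IsConflation i g) →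
    ∃ (W : C) (i : W ⟶ X), IsConflation i (f ≫ g)
  pushout_inflation : ∀ {X Y Z : C} (f : X ⟶ Y),
    (∃ (W : C) (p : Y ⟶ W), IsConflation f p) → ∀ (a : X ⟶ Z),
    ∃ (P : C) (a' : Y ⟶ P) (f' : Z ⟶ P), IsPushout f a a' f' ∧
      ∃ (W : C) (p : P ⟶ W), IsConflation f' p
  pullback_deflation : ∀ {X Y Z : C} (g : Y ⟶ Z),
    (∃ (W : C) (i : W ⟶ Y), IsConflation i g) → ∀ (a : X ⟶ Z),
    ∃ (P : C) (a' : P ⟶ Y) (g' : P ⟶ X), IsPullback a' g' g a ∧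
      ∃ (W : C) (i : W ⟶ P), IsConflation i g'

namespace ExactStructure

variable {C : Type u} [Category.{v} C] [Preadditive C] [HasZeroObject C]
  [HasBinaryBiproducts C] (E : ExactStructure C)

/-- A morphism is an inflation if it is the first map of a conflation. -/
def Inflation {X Y : C} (f : X ⟶ Y) : Prop := ∃ (Z : C) (g : Y ⟶ Z), E.IsConflation f g

/-- A morphism is a deflation if it is the second map of a conflation. -/
def Deflation {X Y : C} (f : X ⟶ Y) : Prop := ∃ (W : C) (g : W ⟶ X), E.IsConflation g f

/-- A morphism is admissible if it factors as a deflation followed by an inflation. -/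
def Admissible {X Y : C} (f : X ⟶ Y) : Prop :=
  ∃ (I : C) (p : X ⟶ I) (i : I ⟶ Y), E.Deflation p ∧ E.Inflation i ∧ p ≫ i = f

/-- The exact category is weakly idempotent complete: whenever `f ≫ g` is an inflation so
is `f`, and whenever `f ≫ g` is a deflation so is `g`. -/
def WeaklyIdempotentComplete : Prop :=
  (∀ {X Y Z : C} (f : X ⟶ Y) (g : Y ⟶ Z), E.Inflation (f ≫ g) → E.Inflation f) ∧
  (∀ {X Y Z : C} (f : X ⟶ Y) (g : Y ⟶ Z), E.Deflation (f ≫ g) → E.Deflation g)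

/-- Membership in the full subcategory `C'` of objects `X` such that every morphism of `C`
with target `X` is admissible. -/
def GoodTarget (X : C) : Prop := ∀ ⦃A : C⦄ (f : A ⟶ X), E.Admissible f

end ExactStructure

variable {C : Type u} [Category.{v} C] [Preadditive C] [HasZeroObject C]
  [HasBinaryBiproducts C]
namespace ExactStructure

variable (E : ExactStructure C)

section Basic

lemma mono_of_inflation {X Y : C} {f : X ⟶ Y} (h : E.Inflation f) : Mono f := by
  obtain ⟨Z, g, hc⟩ := h
  refine ⟨fun {T} u v huv => ?_⟩
  have h0 : (u ≫ f) ≫ g = 0 := by rw [assoc, E.comp_zero hc, Limits.comp_zero]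
  obtain ⟨l, hl, hu⟩ := E.isKernel hc (u ≫ f) h0
  rw [hu u rfl, hu v huv.symm]

lemma epi_of_deflation {X Y : C} {f : X ⟶ Y} (h : E.Deflation f) : Epi f := by
  obtain ⟨Z, g, hc⟩ := h
  refine ⟨fun {T} u v huv => ?_⟩
  have h0 : g ≫ f ≫ u = 0 := by rw [← assoc, E.comp_zero hc, Limits.zero_comp]
  obtain ⟨l, hl, hu⟩ := E.isCokernel hc (f ≫ u) h0
  rw [hu u rfl, hu v huv.symm]

lemma inflation_id (X : C) : E.Inflation (𝟙 X) := E.id_inflation X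

lemma deflation_id (X : C) : E.Deflation (𝟙 X) := E.id_deflation X

/-- transport a conflation along isomorphisms of its first map -/
lemma deflation_iso_comp {P Q X : C} {g : Q ⟶ X} (h : E.Deflation g) (e : P ≅ Q) :
    E.Deflation (e.hom ≫ g) := by
  obtain ⟨W, i, hc⟩ := h
  exact ⟨W, i ≫ e.inv, E.conflation_iso (Iso.refl W) e.symm (Iso.refl X) hc (by simp) (by simp)⟩

lemma deflation_comp_iso {P Q X : C} {g : Q ⟶ X} (h : E.Deflation g) (e : X ≅ P) :
    E.Deflation (g ≫ e.hom) := by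
  obtain ⟨W, i, hc⟩ := h
  exact ⟨W, i, E.conflation_iso (Iso.refl W) (Iso.refl Q) e hc (by simp) (by simp)⟩

lemma inflation_iso_comp {P Q X : C} {f : Q ⟶ X} (h : E.Inflation f) (e : P ≅ Q) :
    E.Inflation (e.hom ≫ f) := by
  obtain ⟨W, g, hc⟩ := h
  exact ⟨W, g, E.conflation_iso e.symm (Iso.refl X) (Iso.refl W) hc (by simp) (by simp)⟩

lemma inflation_comp_iso {P Q X : C} {f : X ⟶ Q} (h : E.Inflation f) (e : Q ≅ P) :
    E.Inflation (f ≫ e.hom) := by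
  obtain ⟨W, g, hc⟩ := h
  exact ⟨W, e.inv ≫ g, E.conflation_iso (Iso.refl X) e (Iso.refl W) hc (by simp) (by simp)⟩

lemma inflation_of_isIso {X Y : C} (f : X ⟶ Y) [IsIso f] : E.Inflation f := by
  simpa using E.inflation_comp_iso (E.inflation_id X) (asIso f)

lemma deflation_of_isIso {X Y : C} (f : X ⟶ Y) [IsIso f] : E.Deflation f := by
  simpa using E.deflation_iso_comp (E.deflation_id Y) (asIso f)

end Basic

end ExactStructure
namespace ExactStructure

variable (E : ExactStructure C)

section Recog

/-- If `g` is a deflation and `k` is a kernel of `g`, then `(k, g)` is a conflation. -/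
lemma isConflation_of_isKernel {K Y Z : C} {k : K ⟶ Y} {g : Y ⟶ Z}
    (hg : E.Deflation g) (hk : k ≫ g = 0)
    (huniv : ∀ {T : C} (t : T ⟶ Y), t ≫ g = 0 → ∃! s : T ⟶ K, s ≫ k = t) :
    E.IsConflation k g := by
  obtain ⟨W, i, hc⟩ := hg
  have hmonok : Mono k := by
    refine ⟨fun {T} u v huv => ?_⟩
    have h0 : (u ≫ k) ≫ g = 0 := by rw [assoc, hk, Limits.comp_zero]
    obtain ⟨l, _, hu⟩ := huniv (u ≫ k) h0
    rw [hu u rfl, hu v huv.symm]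
  have hmonoi : Mono i := E.mono_of_inflation ⟨Z, g, hc⟩
  obtain ⟨s₁, hs₁, -⟩ := huniv i (E.comp_zero hc)
  obtain ⟨s₂, hs₂, -⟩ := E.isKernel hc k hk
  have h₁ : s₁ ≫ s₂ = 𝟙 W := by
    rw [← cancel_mono i]; rw [assoc, hs₂, hs₁, id_comp]
  have h₂ : s₂ ≫ s₁ = 𝟙 K := by
    rw [← cancel_mono k]; rw [assoc, hs₁, hs₂, id_comp]
  exact E.conflation_iso (⟨s₁, s₂, h₁, h₂⟩ : W ≅ K) (Iso.refl Y) (Iso.refl Z) hc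
    (by simpa using hs₁.symm) (by simp)

/-- If `f` is an inflation and `c` is a cokernel of `f`, then `(f, c)` is a conflation. -/
lemma isConflation_of_isCokernel {X Y Q : C} {f : X ⟶ Y} {c : Y ⟶ Q}
    (hf : E.Inflation f) (hc0 : f ≫ c = 0)
    (huniv : ∀ {T : C} (t : Y ⟶ T), f ≫ t = 0 → ∃! s : Q ⟶ T, c ≫ s = t) :
    E.IsConflation f c := by
  obtain ⟨W, g, hc⟩ := hf
  have hepic : Epi c := by
    refine ⟨fun {T} u v huv => ?_⟩
    have h0 : f ≫ c ≫ u = 0 := by rw [← assoc, hc0, Limits.zero_comp]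
    obtain ⟨l, _, hu⟩ := huniv (c ≫ u) h0
    rw [hu u rfl, hu v huv.symm]
  have hepig : Epi g := E.epi_of_deflation ⟨X, f, hc⟩
  obtain ⟨s₁, hs₁, -⟩ := huniv g (E.comp_zero hc)
  obtain ⟨s₂, hs₂, -⟩ := E.isCokernel hc c hc0
  have h₁ : s₂ ≫ s₁ = 𝟙 W := by
    rw [← cancel_epi g]; rw [← assoc, hs₂, hs₁, comp_id]
  have h₂ : s₁ ≫ s₂ = 𝟙 Q := by
    rw [← cancel_epi c]; rw [← assoc, hs₁, hs₂, comp_id]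
  exact E.conflation_iso (Iso.refl X) (Iso.refl Y) (⟨s₂, s₁, h₁, h₂⟩ : W ≅ Q) hc
    (by simp) (by simpa using hs₂)

end Recog

end ExactStructure
namespace ExactStructure

variable (E : ExactStructure C)

section ZeroBiprod

open ZeroObject

lemma conflation_id_zero (X : C) : E.IsConflation (𝟙 X) (0 : X ⟶ 0) := by
  obtain ⟨Z, g, hc⟩ := E.id_inflation X
  have hg : g = 0 := by simpa using E.comp_zero hc
  have hZ : 𝟙 Z = 0 := by
    obtain ⟨l, -, hu⟩ := E.isCokernel hc (0 : X ⟶ Z) (by simp)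
    rw [hu (𝟙 Z) (by simp [hg]), hu 0 (by simp)]
  have hZ0 : IsZero Z := by
    rw [IsZero.iff_id_eq_zero]; exact hZ
  exact E.conflation_iso (Iso.refl X) (Iso.refl X) hZ0.isoZero hc (by simp)
    (by simp [hg])

lemma conflation_zero_id (X : C) : E.IsConflation (0 : (0 : C) ⟶ X) (𝟙 X) := by
  obtain ⟨Z, f, hc⟩ := E.id_deflation X
  have hf : f = 0 := by simpa using E.comp_zero hc
  have hZ : 𝟙 Z = 0 := by
    obtain ⟨l, -, hu⟩ := E.isKernel hc (0 : Z ⟶ X) (by simp)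
    rw [hu (𝟙 Z) (by simp [hf]), hu 0 (by simp)]
  have hZ0 : IsZero Z := by
    rw [IsZero.iff_id_eq_zero]; exact hZ
  exact E.conflation_iso hZ0.isoZero (Iso.refl X) (Iso.refl X) hc (by simp [hf])
    (by simp)

lemma deflation_to_zero (X : C) : E.Deflation (0 : X ⟶ 0) := ⟨X, 𝟙 X, E.conflation_id_zero X⟩

lemma inflation_from_zero (X : C) : E.Inflation (0 : (0 : C) ⟶ X) :=
  ⟨X, 𝟙 X, E.conflation_zero_id X⟩

end ZeroBiprod

section PullbackTransport

lemma deflation_of_isPullback {X Y Z P : C} {g : Y ⟶ Z} (hg : E.Deflation g)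
    {a : X ⟶ Z} {a' : P ⟶ Y} {g' : P ⟶ X} (h : IsPullback a' g' g a) :
    E.Deflation g' := by
  obtain ⟨Q, b', q', hpb, hdefl⟩ := E.pullback_deflation g hg a
  have := h.isoIsPullback_hom_snd _ _ hpb
  rw [← this]
  exact E.deflation_iso_comp hdefl _

lemma inflation_of_isPushout {X Y Z P : C} {f : X ⟶ Y} (hf : E.Inflation f)
    {a : X ⟶ Z} {a' : Y ⟶ P} {f' : Z ⟶ P} (h : IsPushout f a a' f') :
    E.Inflation f' := by
  obtain ⟨Q, b', q', hpo, hinfl⟩ := E.pushout_inflation f hf a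
  have := hpo.inr_isoIsPushout_hom _ _ h
  rw [← this]
  exact E.inflation_comp_iso hinfl _

lemma conflation_of_isPullback {W X Y Z P : C} {i : W ⟶ Y} {g : Y ⟶ Z}
    (hc : E.IsConflation i g) {a : X ⟶ Z} {a' : P ⟶ Y} {g' : P ⟶ X}
    (h : IsPullback a' g' g a) :
    ∃ i' : W ⟶ P, i' ≫ a' = i ∧ i' ≫ g' = 0 ∧ E.IsConflation i' g' := by
  have hdefl : E.Deflation g' := E.deflation_of_isPullback ⟨W, i, hc⟩ h
  set i' := h.lift i 0 (by simp [E.comp_zero hc]) with hi'def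
  have hfst : i' ≫ a' = i := h.lift_fst ..
  have hsnd : i' ≫ g' = 0 := h.lift_snd ..
  have hi : Mono i := E.mono_of_inflation ⟨Z, g, hc⟩
  have hmono : Mono i' := by
    refine ⟨fun {T} u v huv => ?_⟩
    have := congrArg (· ≫ a') huv
    simp only [assoc, hfst] at this
    exact (cancel_mono i).1 this
  refine ⟨i', hfst, hsnd, ?_⟩
  refine E.isConflation_of_isKernel hdefl hsnd (fun {T} t ht => ?_)
  have h0 : (t ≫ a') ≫ g = 0 := by
    rw [assoc, h.w, ← assoc, ht, Limits.zero_comp]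
  obtain ⟨s, hs, hsu⟩ := E.isKernel hc (t ≫ a') h0
  have hsl : s ≫ i' = t := by
    refine h.hom_ext ?_ ?_
    · rw [assoc, hfst, hs]
    · rw [assoc, hsnd, Limits.comp_zero, ht]
  exact ⟨s, hsl, fun y hy => (cancel_mono i').1 (hy.trans hsl.symm)⟩

end PullbackTransport

end ExactStructure
namespace ExactStructure

variable (E : ExactStructure C)

section Biprod

open ZeroObject

lemma inflation_inl (X Y : C) : E.Inflation (biprod.inl : X ⟶ X ⊞ Y) :=
  E.inflation_of_isPushout (E.inflation_from_zero Y) (IsPushout.of_has_biproduct X Y).flip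

lemma deflation_snd (X Y : C) : E.Deflation (biprod.snd : X ⊞ Y ⟶ Y) :=
  E.deflation_of_isPullback (E.deflation_to_zero X) (IsPullback.of_has_biproduct X Y)

lemma deflation_fst (X Y : C) : E.Deflation (biprod.fst : X ⊞ Y ⟶ X) :=
  E.deflation_of_isPullback (E.deflation_to_zero Y) (IsPullback.of_has_biproduct X Y).flip

lemma conflation_inl_snd (X Y : C) :
    E.IsConflation (biprod.inl : X ⟶ X ⊞ Y) (biprod.snd : X ⊞ Y ⟶ Y) := by
  have hepi : Epi (biprod.snd : X ⊞ Y ⟶ Y) := E.epi_of_deflation (E.deflation_snd X Y)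
  refine E.isConflation_of_isCokernel (E.inflation_inl X Y) (by simp)
    (fun {T} t ht => ?_)
  have key : biprod.snd ≫ biprod.inr ≫ t = t := by
    have h2 := congrArg (· ≫ t) (biprod.total (X := X) (Y := Y))
    simp only [Preadditive.add_comp, assoc, id_comp] at h2
    rwa [ht, Limits.comp_zero, zero_add] at h2
  exact ⟨biprod.inr ≫ t, key, fun y hy =>
    (cancel_epi (biprod.snd : X ⊞ Y ⟶ Y)).1 (hy.trans key.symm)⟩

lemma deflation_biprod_map_id {A K J : C} {e : K ⟶ J} (he : E.Deflation e) :
    E.Deflation (biprod.map (𝟙 A) e) := by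
  have comm : (biprod.snd : A ⊞ K ⟶ K) ≫ e = biprod.map (𝟙 A) e ≫ biprod.snd := by simp
  have hlim : IsLimit (PullbackCone.mk _ _ comm) := by
    refine PullbackCone.IsLimit.mk comm (fun s => biprod.lift (s.snd ≫ biprod.fst) s.fst)
      (fun s => by simp) (fun s => ?_) (fun s m h₁ h₂ => ?_)
    · apply biprod.hom_ext
      · simp
      · simp [s.condition]
    · apply biprod.hom_ext
      · have := congrArg (· ≫ biprod.fst) h₂
        simpa using this
      · simpa using h₁
  exact E.deflation_of_isPullback he (IsPullback.of_isLimit hlim)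

end Biprod

end ExactStructure
namespace ExactStructure

variable (E : ExactStructure C)

section Good

open ZeroObject

lemma goodTarget_zero : E.GoodTarget (0 : C) := by
  intro A f
  have hf : f = 0 := (isZero_zero C).eq_of_tgt f 0
  exact ⟨0, 0, 𝟙 0, by simpa [hf] using E.deflation_to_zero A, E.inflation_id 0, by simp [hf]⟩

lemma goodTarget_of_iso {X X' : C} (e : X ≅ X') (hX : E.GoodTarget X) : E.GoodTarget X' := by
  intro A f
  obtain ⟨I, p, i, hp, hi, hpi⟩ := hX (f ≫ e.inv)
  exact ⟨I, p, i ≫ e.hom, hp, E.inflation_comp_iso hi e, by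
    rw [← assoc, hpi, assoc, e.inv_hom_id, comp_id]⟩

/-- The key lemma: `GoodTarget` is closed under extensions. -/
lemma goodTarget_ext (hwic : E.WeaklyIdempotentComplete) {L M N : C} {l : L ⟶ M} {g : M ⟶ N}
    (hc : E.IsConflation l g) (hL : E.GoodTarget L) (hN : E.GoodTarget N) :
    E.GoodTarget M := by
  intro A f
  -- Step 1: factor `f ≫ g` through its image `I`.
  obtain ⟨I, p, i, hp, hi, hpi⟩ := hN (f ≫ g)
  -- Step 2: pull back the deflation `g` along `i`.
  obtain ⟨P, π₁, π₂, hpb, hπ₂⟩ := E.pullback_deflation g ⟨L, l, hc⟩ i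
  -- `L` is a kernel of `π₂`.
  obtain ⟨l', hl'a, hl'g, hcl'⟩ := E.conflation_of_isPullback hc hpb
  have hl'mono : Mono l' := E.mono_of_inflation ⟨_, _, hcl'⟩
  -- Step 3: `π₁` is an inflation.
  obtain ⟨Q, q, hq⟩ := hi
  have hgq : E.Deflation (g ≫ q) := E.deflation_comp g q ⟨L, l, hc⟩ ⟨I, i, hq⟩
  have hπ₁mono : Mono π₁ := by
    have hi_mono : Mono i := E.mono_of_inflation ⟨Q, q, hq⟩
    refine ⟨fun {T} x y hxy => ?_⟩
    refine hpb.hom_ext hxy ((cancel_mono i).1 ?_)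
    rw [assoc, assoc, ← hpb.w, ← assoc, hxy, assoc]
  have hπ₁c : E.IsConflation π₁ (g ≫ q) := by
    refine E.isConflation_of_isKernel hgq ?_ (fun {T} t ht => ?_)
    · rw [← assoc, hpb.w, assoc, E.comp_zero hq, Limits.comp_zero]
    · rw [← assoc] at ht
      obtain ⟨s, hs, -⟩ := E.isKernel hq (t ≫ g) ht
      have hr := hpb.lift_fst (t) s hs.symm
      exact ⟨hpb.lift t s hs.symm, hr, fun y hy => (cancel_mono π₁).1 (by rw [hy, hr])⟩
  -- Step 5: lift `f` to `u : A ⟶ P`.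
  set u := hpb.lift f p hpi.symm with hudef
  have hu₁ : u ≫ π₁ = f := hpb.lift_fst f p hpi.symm
  have hu₂ : u ≫ π₂ = p := hpb.lift_snd f p hpi.symm
  -- Step 6a: `d = (u, l') : A ⊞ L ⟶ P` is a deflation.
  set d := biprod.desc u l' with hddef
  have hcomm : (biprod.fst : A ⊞ L ⟶ A) ≫ p = d ≫ π₂ := by
    apply biprod.hom_ext' <;> simp [hddef, hu₂, hl'g]
  have hdecomp : ∀ {T : C} (r : T ⟶ A ⊞ L), r ≫ d = r ≫ biprod.fst ≫ u + r ≫ biprod.snd ≫ l' := by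
    intro T r
    have hdsum : d = biprod.fst ≫ u + biprod.snd ≫ l' := by
      apply biprod.hom_ext' <;> simp [hddef, Preadditive.comp_add]
    rw [hdsum, Preadditive.comp_add]
  have hdpb : IsPullback (biprod.fst : A ⊞ L ⟶ A) d p π₂ := by
    refine IsPullback.of_isLimit (PullbackCone.IsLimit.mk hcomm (fun s => ?_) (fun s => ?_)
      (fun s => ?_) (fun s r h₁ h₂ => ?_))
    · -- lift
      have h0 : (s.snd - s.fst ≫ u) ≫ π₂ = 0 := by
        rw [Preadditive.sub_comp, assoc, hu₂, s.condition, sub_self]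
      exact biprod.lift s.fst (E.isKernel hcl' (s.snd - s.fst ≫ u) h0).choose
    · simp
    · have h0 : (s.snd - s.fst ≫ u) ≫ π₂ = 0 := by
        rw [Preadditive.sub_comp, assoc, hu₂, s.condition, sub_self]
      have hch := (E.isKernel hcl' (s.snd - s.fst ≫ u) h0).choose_spec.1
      rw [hdecomp]
      simp only [biprod.lift_fst_assoc, biprod.lift_snd_assoc]
      rw [hch]; abel
    · have h0 : (s.snd - s.fst ≫ u) ≫ π₂ = 0 := by
        rw [Preadditive.sub_comp, assoc, hu₂, s.condition, sub_self]
      have hch := (E.isKernel hcl' (s.snd - s.fst ≫ u) h0).choose_spec.1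
      apply biprod.hom_ext
      · simpa using h₁
      · rw [biprod.lift_snd, ← cancel_mono l', hch]
        rw [hdecomp] at h₂
        rw [assoc, eq_sub_iff_add_eq, add_comm, ← h₂]
        congr 1
        rw [← assoc, h₁]
  have hd : E.Deflation d := E.deflation_of_isPullback hp hdpb
  -- Step 6b/c: kernel of `d`, and the admissible map to `L`.
  obtain ⟨K, k, hkd⟩ := id hd
  obtain ⟨J, e, m, he, hm, hem⟩ := hL (k ≫ biprod.snd)
  obtain ⟨Cc, cb, hcb⟩ := hm
  -- Step 6d: construct `w : P ⟶ Cc`.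
  have hkc : k ≫ biprod.snd ≫ cb = 0 := by
    rw [← assoc, ← hem, assoc, E.comp_zero hcb, Limits.comp_zero]
  obtain ⟨w, hw, -⟩ := E.isCokernel hkd (biprod.snd ≫ cb) hkc
  have hl'w : l' ≫ w = cb := by
    have h2 : biprod.inr ≫ d = l' := biprod.inr_desc u l'
    rw [← h2, assoc, hw, biprod.inr_snd_assoc]
  have huw : u ≫ w = 0 := by
    have h2 : biprod.inl ≫ d = u := biprod.inl_desc u l'
    rw [← h2, assoc, hw, biprod.inl_snd_assoc, Limits.zero_comp]
  -- Step 6e: `w` is a deflation.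
  have hwdefl : E.Deflation w := hwic.2 l' w (by rw [hl'w]; exact ⟨_, _, hcb⟩)
  -- Step 6f: kernel of `w` and the induced `v : A ⟶ Kw`.
  obtain ⟨Kw, kw, hkw⟩ := hwdefl
  have hkwmono : Mono kw := E.mono_of_inflation ⟨_, _, hkw⟩
  obtain ⟨v, hv, -⟩ := E.isKernel hkw u huw
  -- Step 6g: `Dm : A ⊞ J ⟶ Kw` is a deflation.
  have hmapd0 : ((biprod.map (𝟙 A) m) ≫ d) ≫ w = 0 := by
    rw [assoc, hw, ← assoc, biprod.map_snd, assoc, E.comp_zero hcb, Limits.comp_zero]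
  obtain ⟨Dm, hDm, -⟩ := E.isKernel hkw ((biprod.map (𝟙 A) m) ≫ d) hmapd0
  have hmmono : Mono m := E.mono_of_inflation ⟨_, _, hcb⟩
  have hmapmono : Mono (biprod.map (𝟙 A) m) := by
    refine ⟨fun {T} x y hxy => ?_⟩
    apply biprod.hom_ext
    · have := congrArg (· ≫ biprod.fst) hxy
      simpa using this
    · have := congrArg (· ≫ biprod.snd) hxy
      simp only [assoc, biprod.map_snd] at this
      rw [← assoc, ← assoc] at this
      exact (cancel_mono m).1 this
  have hDmpb : IsPullback (biprod.map (𝟙 A) m) Dm d kw := by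
    have hcomm2 : (biprod.map (𝟙 A) m) ≫ d = Dm ≫ kw := hDm.symm
    refine IsPullback.of_isLimit (PullbackCone.IsLimit.mk hcomm2 (fun s => ?_) (fun s => ?_)
      (fun s => ?_) (fun s r h₁ h₂ => ?_))
    · have h0 : (s.fst ≫ biprod.snd) ≫ cb = 0 := by
        rw [assoc, ← hw, ← assoc, s.condition, assoc, E.comp_zero hkw, Limits.comp_zero]
      exact biprod.lift (s.fst ≫ biprod.fst) (E.isKernel hcb (s.fst ≫ biprod.snd) h0).choose
    · have h0 : (s.fst ≫ biprod.snd) ≫ cb = 0 := by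
        rw [assoc, ← hw, ← assoc, s.condition, assoc, E.comp_zero hkw, Limits.comp_zero]
      have hch := (E.isKernel hcb (s.fst ≫ biprod.snd) h0).choose_spec.1
      apply biprod.hom_ext
      · simp
      · simpa using hch
    · have h0 : (s.fst ≫ biprod.snd) ≫ cb = 0 := by
        rw [assoc, ← hw, ← assoc, s.condition, assoc, E.comp_zero hkw, Limits.comp_zero]
      have hch := (E.isKernel hcb (s.fst ≫ biprod.snd) h0).choose_spec.1
      rw [← cancel_mono kw, assoc, ← hcomm2, ← assoc]
      have : biprod.lift (s.fst ≫ biprod.fst) (E.isKernel hcb (s.fst ≫ biprod.snd) h0).choose ≫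
          biprod.map (𝟙 A) m = s.fst := by
        apply biprod.hom_ext
        · simp
        · simpa using hch
      rw [this, s.condition]
    · rw [← cancel_mono (biprod.map (𝟙 A) m), h₁]
      have h0 : (s.fst ≫ biprod.snd) ≫ cb = 0 := by
        rw [assoc, ← hw, ← assoc, s.condition, assoc, E.comp_zero hkw, Limits.comp_zero]
      have hch := (E.isKernel hcb (s.fst ≫ biprod.snd) h0).choose_spec.1
      apply biprod.hom_ext
      · simp
      · simpa using hch.symm
  have hDmdefl : E.Deflation Dm := E.deflation_of_isPullback hd hDmpb
  -- Step 6h/i: relate `v` to a composition of deflations.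
  have hinlDm : biprod.inl ≫ Dm = v := by
    rw [← cancel_mono kw, assoc, hDm, ← assoc, biprod.inl_map, id_comp, hv]
    exact (biprod.inl_desc u l')
  set k' : K ⟶ A ⊞ J := biprod.lift (k ≫ biprod.fst) e with hk'def
  have hk'map : k' ≫ biprod.map (𝟙 A) m = k := by
    apply biprod.hom_ext
    · simp [hk'def]
    · simp [hk'def, hem]
  have hk'Dm : k' ≫ Dm = 0 := by
    rw [← cancel_mono kw, assoc, hDm, ← assoc, hk'map, E.comp_zero hkd, Limits.zero_comp]
  set φ : A ⊞ K ⟶ A ⊞ J := biprod.desc biprod.inl k' with hφdef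
  have hφDm : φ ≫ Dm = biprod.fst ≫ v := by
    apply biprod.hom_ext'
    · simp [hφdef, hinlDm]
    · simp [hφdef, hk'Dm]
  -- Step 6j: `φ` is a deflation.
  have hφdefl : E.Deflation φ := by
    have hψ : IsIso (biprod.desc biprod.inl (biprod.lift (k ≫ biprod.fst) (𝟙 K)) :
        A ⊞ K ⟶ A ⊞ K) := by
      refine ⟨biprod.desc biprod.inl (biprod.lift (-(k ≫ biprod.fst)) (𝟙 K)), ?_, ?_⟩
      · apply biprod.hom_ext' <;> apply biprod.hom_ext <;>
          simp [biprod.lift_desc, Preadditive.add_comp, Preadditive.comp_add]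
      · apply biprod.hom_ext' <;> apply biprod.hom_ext <;>
          simp [biprod.lift_desc, Preadditive.add_comp, Preadditive.comp_add]
    have hψφ : (biprod.desc biprod.inl (biprod.lift (k ≫ biprod.fst) (𝟙 K)) : A ⊞ K ⟶ A ⊞ K) ≫
        biprod.map (𝟙 A) e = φ := by
      apply biprod.hom_ext'
      · simp [hφdef]
      · apply biprod.hom_ext <;> simp [hφdef, hk'def]
    rw [← hψφ]
    exact E.deflation_iso_comp (E.deflation_biprod_map_id he)
      (asIso (biprod.desc biprod.inl (biprod.lift (k ≫ biprod.fst) (𝟙 K))))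
  -- Step 6l: `v` is a deflation.
  have hfv : E.Deflation (biprod.fst ≫ v : A ⊞ K ⟶ Kw) := by
    rw [← hφDm]
    exact E.deflation_comp φ Dm hφdefl hDmdefl
  have hvdefl : E.Deflation v := hwic.2 biprod.fst v hfv
  -- Conclusion: `f = v ≫ (kw ≫ π₁)` is admissible.
  exact ⟨Kw, v, kw ≫ π₁, hvdefl,
    E.inflation_comp kw π₁ ⟨_, w, hkw⟩ ⟨_, _, hπ₁c⟩,
    by rw [← assoc, hv, hu₁]⟩

end Good

end ExactStructure
namespace ExactStructure

variable (E : ExactStructure C)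

section KerCoker

/-- The kernel of a deflation out of a good object is good. -/
lemma goodTarget_ker (hwic : E.WeaklyIdempotentComplete) {K X I : C} {k : K ⟶ X} {p : X ⟶ I}
    (hc : E.IsConflation k p) (hX : E.GoodTarget X) : E.GoodTarget K := by
  intro T t
  have hkmono : Mono k := E.mono_of_inflation ⟨_, _, hc⟩
  obtain ⟨J, e, m, he, hm, hem⟩ := hX (t ≫ k)
  have hepi : Epi e := E.epi_of_deflation he
  have hmp : m ≫ p = 0 := by
    rw [← cancel_epi e, ← assoc, hem, assoc, E.comp_zero hc, Limits.comp_zero,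
      Limits.comp_zero]
  obtain ⟨m', hm', -⟩ := E.isKernel hc m hmp
  have hm'infl : E.Inflation m' := hwic.1 m' k (by rw [hm']; exact hm)
  refine ⟨J, e, m', he, hm'infl, ?_⟩
  rw [← cancel_mono k, assoc, hm', hem]

/-- The cokernel of an inflation into a good object is good. -/
lemma goodTarget_coker (hwic : E.WeaklyIdempotentComplete) {X Y Q : C} {i : X ⟶ Y} {c : Y ⟶ Q}
    (hc : E.IsConflation i c) (hY : E.GoodTarget Y) : E.GoodTarget Q := by
  intro T t
  -- pull back the deflation `c` along `t`
  obtain ⟨P', a', c', hpb, -⟩ := E.pullback_deflation c ⟨X, i, hc⟩ t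
  obtain ⟨i', hi'a, hi'c, hci'⟩ := E.conflation_of_isPullback hc hpb
  -- factor `a'` through its image
  obtain ⟨J', e, m, he, hm, hem⟩ := hY a'
  -- `i' ≫ e` is an inflation
  have hie : E.Inflation (i' ≫ e) := hwic.1 (i' ≫ e) m (by rw [assoc, hem, hi'a]; exact ⟨_, _, hc⟩)
  obtain ⟨R, r, hr⟩ := hie
  have hrepi : Epi r := E.epi_of_deflation ⟨_, _, hr⟩
  -- induced maps
  have him0 : (i' ≫ e) ≫ m ≫ c = 0 := by
    rw [← assoc, assoc i' e m, hem, hi'a, E.comp_zero hc]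
  obtain ⟨q, hq, -⟩ := E.isCokernel hr (m ≫ c) him0
  have hier0 : i' ≫ e ≫ r = 0 := by rw [← assoc, E.comp_zero hr]
  obtain ⟨dt, hdt, -⟩ := E.isCokernel hci' (e ≫ r) hier0
  have hc'epi : Epi c' := E.epi_of_deflation ⟨_, _, hci'⟩
  have ht : dt ≫ q = t := by
    rw [← cancel_epi c', ← assoc, hdt, assoc, hq, ← assoc, hem, hpb.w]
  -- `dt` is a deflation
  have hdtdefl : E.Deflation dt :=
    hwic.2 c' dt (by rw [hdt]; exact E.deflation_comp e r he ⟨_, _, hr⟩)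
  -- `q` is an inflation via a pushout square
  have hifac : i = (i' ≫ e) ≫ m := by rw [assoc, hem, hi'a]
  have hdesc0 : ∀ s : PushoutCocone m r, i ≫ s.inl = 0 := fun s => by
    rw [hifac, assoc, s.condition, ← assoc, E.comp_zero hr, Limits.zero_comp]
  have hpo : IsPushout m r c q := by
    refine IsPushout.of_isColimit (PushoutCocone.IsColimit.mk hq.symm
      (fun s => (E.isCokernel hc s.inl (hdesc0 s)).choose)
      (fun s => (E.isCokernel hc s.inl (hdesc0 s)).choose_spec.1)
      (fun s => ?_) (fun s mm h₁ _ => (E.isCokernel hc s.inl (hdesc0 s)).choose_spec.2 mm h₁))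
    rw [← cancel_epi r, ← assoc, hq, assoc,
      (E.isCokernel hc s.inl (hdesc0 s)).choose_spec.1, s.condition]
  exact ⟨R, dt, q, hdtdefl, E.inflation_of_isPushout hm hpo, ht⟩

end KerCoker

end ExactStructure
namespace ExactStructure

variable (E : ExactStructure C)

section Subcat

open ZeroObject

lemma hasZeroObject_good : HasZeroObject (ObjectProperty.FullSubcategory E.GoodTarget) := by
  refine ⟨⟨⟨0, E.goodTarget_zero⟩, ?_, ?_⟩⟩
  · intro Y
    exact ⟨⟨⟨ObjectProperty.homMk (0 : (0 : C) ⟶ Y.obj)⟩, fun a => ObjectProperty.hom_ext _ ((isZero_zero C).eq_of_src a.hom _)⟩⟩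
  · intro Y
    exact ⟨⟨⟨ObjectProperty.homMk (0 : Y.obj ⟶ (0 : C))⟩, fun a => ObjectProperty.hom_ext _ ((isZero_zero C).eq_of_tgt a.hom _)⟩⟩

lemma hasBinaryBiproducts_good (hwic : E.WeaklyIdempotentComplete) :
    HasBinaryBiproducts (ObjectProperty.FullSubcategory E.GoodTarget) := by
  refine ⟨fun X Y => HasBinaryBiproduct.mk ?_⟩
  refine ⟨{ pt := ⟨X.obj ⊞ Y.obj,
              E.goodTarget_ext hwic (E.conflation_inl_snd X.obj Y.obj) X.property Y.property⟩
            fst := ObjectProperty.homMk (biprod.fst : X.obj ⊞ Y.obj ⟶ X.obj)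
            snd := ObjectProperty.homMk (biprod.snd : X.obj ⊞ Y.obj ⟶ Y.obj)
            inl := ObjectProperty.homMk (biprod.inl : X.obj ⟶ X.obj ⊞ Y.obj)
            inr := ObjectProperty.homMk (biprod.inr : Y.obj ⟶ X.obj ⊞ Y.obj)
            inl_fst := ObjectProperty.hom_ext _ biprod.inl_fst
            inl_snd := ObjectProperty.hom_ext _ biprod.inl_snd
            inr_fst := ObjectProperty.hom_ext _ biprod.inr_fst
            inr_snd := ObjectProperty.hom_ext _ biprod.inr_snd }, ?_⟩
  exact isBinaryBilimitOfTotal _ (ObjectProperty.hom_ext _ biprod.total)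

lemma hasKernels_good (hwic : E.WeaklyIdempotentComplete) :
    HasKernels (ObjectProperty.FullSubcategory E.GoodTarget) := by
  constructor
  intro X Y f
  obtain ⟨I, p, i, hp, hi, hpi⟩ := Y.property f.hom
  obtain ⟨K, k, hkp⟩ := id hp
  have hKgood := E.goodTarget_ker hwic hkp X.property
  have himono : Mono i := E.mono_of_inflation hi
  have h0 : ∀ u : X.obj ⟶ Y.obj, p ≫ i = u → k ≫ u = 0 := fun u hu => by
    rw [← hu, ← assoc, E.comp_zero hkp, Limits.zero_comp]
  have hkf : (ObjectProperty.homMk k : (⟨K, hKgood⟩ : ObjectProperty.FullSubcategory E.GoodTarget) ⟶ X) ≫ f = 0 :=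
    ObjectProperty.hom_ext _ (h0 f.hom hpi)
  have hfac : ∀ {A : C} (g' : A ⟶ X.obj), ∀ u : X.obj ⟶ Y.obj, p ≫ i = u →
      g' ≫ u = 0 → g' ≫ p = 0 := by
    intro A g' u hu hg'
    rw [← cancel_mono i, assoc, hu, Limits.zero_comp]
    exact hg'
  refine HasLimit.mk ⟨KernelFork.ofι
    (ObjectProperty.homMk k : (⟨K, hKgood⟩ : ObjectProperty.FullSubcategory E.GoodTarget) ⟶ X) hkf, ?_⟩
  refine KernelFork.IsLimit.ofι _ _
    (fun {W'} g' hg' => ObjectProperty.homMk (E.isKernel hkp g'.hom (hfac g'.hom f.hom hpi (congrArg InducedCategory.Hom.hom hg'))).choose)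
    (fun {W'} g' hg' => ObjectProperty.hom_ext _ (E.isKernel hkp g'.hom (hfac g'.hom f.hom hpi (congrArg InducedCategory.Hom.hom hg'))).choose_spec.1)
    (fun {W'} g' hg' m hm => ObjectProperty.hom_ext _ ((E.isKernel hkp g'.hom (hfac g'.hom f.hom hpi (congrArg InducedCategory.Hom.hom hg'))).choose_spec.2 m.hom (congrArg InducedCategory.Hom.hom hm)))

lemma hasCokernels_good (hwic : E.WeaklyIdempotentComplete) :
    HasCokernels (ObjectProperty.FullSubcategory E.GoodTarget) := by
  constructor
  intro X Y f
  obtain ⟨I, p, i, hp, hi, hpi⟩ := Y.property f.hom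
  obtain ⟨Cc, c, hic⟩ := id hi
  have hCgood := E.goodTarget_coker hwic hic Y.property
  have hpepi : Epi p := E.epi_of_deflation hp
  have h0 : ∀ u : X.obj ⟶ Y.obj, p ≫ i = u → u ≫ c = 0 := fun u hu => by
    rw [← hu, assoc, E.comp_zero hic, Limits.comp_zero]
  have hfc : f ≫ (ObjectProperty.homMk c : Y ⟶ (⟨Cc, hCgood⟩ : ObjectProperty.FullSubcategory E.GoodTarget)) = 0 :=
    ObjectProperty.hom_ext _ (h0 f.hom hpi)
  have hfac : ∀ {A : C} (t : Y.obj ⟶ A), ∀ u : X.obj ⟶ Y.obj, p ≫ i = u →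
      u ≫ t = 0 → i ≫ t = 0 := by
    intro A t u hu ht
    rw [← cancel_epi p, ← assoc, hu, ht, Limits.comp_zero]
  refine HasColimit.mk ⟨CokernelCofork.ofπ
    (ObjectProperty.homMk c : Y ⟶ (⟨Cc, hCgood⟩ : ObjectProperty.FullSubcategory E.GoodTarget)) hfc, ?_⟩
  refine CokernelCofork.IsColimit.ofπ _ _
    (fun {W'} t ht => ObjectProperty.homMk (E.isCokernel hic t.hom (hfac t.hom f.hom hpi (congrArg InducedCategory.Hom.hom ht))).choose)
    (fun {W'} t ht => ObjectProperty.hom_ext _ (E.isCokernel hic t.hom (hfac t.hom f.hom hpi (congrArg InducedCategory.Hom.hom ht))).choose_spec.1)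
    (fun {W'} t ht m hm => ObjectProperty.hom_ext _ ((E.isCokernel hic t.hom (hfac t.hom f.hom hpi (congrArg InducedCategory.Hom.hom ht))).choose_spec.2 m.hom (congrArg InducedCategory.Hom.hom hm)))

lemma normalMono_good (hwic : E.WeaklyIdempotentComplete)
    {X Y : ObjectProperty.FullSubcategory E.GoodTarget} (f : X ⟶ Y) [Mono f] : Nonempty (NormalMono f) := by
  obtain ⟨I, p, i, hp, hi, hpi⟩ := Y.property f.hom
  obtain ⟨K, k, hkp⟩ := id hp
  obtain ⟨Cc, c, hic⟩ := id hi
  have hKgood := E.goodTarget_ker hwic hkp X.property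
  have hCgood := E.goodTarget_coker hwic hic Y.property
  have himono : Mono i := E.mono_of_inflation hi
  have hpepi : Epi p := E.epi_of_deflation hp
  have h2 : ∀ u : X.obj ⟶ Y.obj, p ≫ i = u → k ≫ u = 0 := fun u hu => by
    rw [← hu, ← assoc, E.comp_zero hkp, Limits.zero_comp]
  -- `k = 0` since `f` is a mono in the subcategory
  have hk0 : k = 0 := by
    have h3 : (ObjectProperty.homMk k : (⟨K, hKgood⟩ : ObjectProperty.FullSubcategory E.GoodTarget) ⟶ X) ≫ f
        = (0 : (⟨K, hKgood⟩ : ObjectProperty.FullSubcategory E.GoodTarget) ⟶ X) ≫ f := by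
      rw [Limits.zero_comp]; exact ObjectProperty.hom_ext _ (h2 f.hom hpi)
    exact congrArg InducedCategory.Hom.hom ((cancel_mono f).1 h3)
  -- hence `p` is an isomorphism
  obtain ⟨l, hl, -⟩ := E.isCokernel hkp (𝟙 X.obj) (by rw [hk0, Limits.zero_comp])
  have hlp : l ≫ p = 𝟙 I := by
    rw [← cancel_epi p, ← assoc, hl, id_comp, comp_id]
  have hwf : ∀ u : X.obj ⟶ Y.obj, p ≫ i = u → u ≫ c = 0 := fun u hu => by
    rw [← hu, assoc, E.comp_zero hic, Limits.comp_zero]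
  have key : ∀ {W' : C} (g' : W' ⟶ Y.obj) (hg' : g' ≫ c = 0), ∀ u : X.obj ⟶ Y.obj,
      p ≫ i = u → ((E.isKernel hic g' hg').choose ≫ l) ≫ u = g' := by
    intro W' g' hg' u hu
    have hs := (E.isKernel hic g' hg').choose_spec.1
    rw [← hu, assoc, ← assoc l p i, hlp, id_comp]
    exact hs
  exact ⟨{ Z := ⟨Cc, hCgood⟩, g := ObjectProperty.homMk c, w := ObjectProperty.hom_ext _ (hwf f.hom hpi),
           isLimit := KernelFork.IsLimit.ofι' f (f := (ObjectProperty.homMk c : Y ⟶ ⟨Cc, hCgood⟩)) (ObjectProperty.hom_ext _ (hwf f.hom hpi))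
             (fun {A} g' hg' => ⟨ObjectProperty.homMk ((E.isKernel hic g'.hom (congrArg InducedCategory.Hom.hom hg')).choose ≫ l : A.obj ⟶ X.obj), ObjectProperty.hom_ext _ (key g'.hom (congrArg InducedCategory.Hom.hom hg') f.hom hpi)⟩) }⟩

lemma normalEpi_good (hwic : E.WeaklyIdempotentComplete)
    {X Y : ObjectProperty.FullSubcategory E.GoodTarget} (f : X ⟶ Y) [Epi f] : Nonempty (NormalEpi f) := by
  obtain ⟨I, p, i, hp, hi, hpi⟩ := Y.property f.hom
  obtain ⟨K, k, hkp⟩ := id hp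
  obtain ⟨Cc, c, hic⟩ := id hi
  have hKgood := E.goodTarget_ker hwic hkp X.property
  have hCgood := E.goodTarget_coker hwic hic Y.property
  have himono : Mono i := E.mono_of_inflation hi
  have hpepi : Epi p := E.epi_of_deflation hp
  have h2 : ∀ u : X.obj ⟶ Y.obj, p ≫ i = u → u ≫ c = 0 := fun u hu => by
    rw [← hu, assoc, E.comp_zero hic, Limits.comp_zero]
  -- `c = 0` since `f` is an epi in the subcategory
  have hc0 : c = 0 := by
    have h3 : f ≫ (ObjectProperty.homMk c : Y ⟶ (⟨Cc, hCgood⟩ : ObjectProperty.FullSubcategory E.GoodTarget))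
        = f ≫ (0 : Y ⟶ (⟨Cc, hCgood⟩ : ObjectProperty.FullSubcategory E.GoodTarget)) := by
      rw [Limits.comp_zero]; exact ObjectProperty.hom_ext _ (h2 f.hom hpi)
    exact congrArg InducedCategory.Hom.hom ((cancel_epi f).1 h3)
  -- hence `i` is an isomorphism
  obtain ⟨l, hl, -⟩ := E.isKernel hic (𝟙 Y.obj) (by rw [hc0, Limits.comp_zero])
  have hil : i ≫ l = 𝟙 I := by
    rw [← cancel_mono i, assoc, hl, comp_id, id_comp]
  have hwf : ∀ u : X.obj ⟶ Y.obj, p ≫ i = u → k ≫ u = 0 := fun u hu => by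
    rw [← hu, ← assoc, E.comp_zero hkp, Limits.zero_comp]
  have key : ∀ {W' : C} (g' : X.obj ⟶ W') (hg' : k ≫ g' = 0), ∀ u : X.obj ⟶ Y.obj,
      p ≫ i = u → u ≫ (l ≫ (E.isCokernel hkp g' hg').choose) = g' := by
    intro W' g' hg' u hu
    have hs := (E.isCokernel hkp g' hg').choose_spec.1
    rw [← hu, assoc, ← assoc i l, hil, id_comp]
    exact hs
  exact ⟨{ W := ⟨K, hKgood⟩, g := ObjectProperty.homMk k, w := ObjectProperty.hom_ext _ (hwf f.hom hpi),
           isColimit := CokernelCofork.IsColimit.ofπ' f (f := (ObjectProperty.homMk k : (⟨K, hKgood⟩ : ObjectProperty.FullSubcategory E.GoodTarget) ⟶ X)) (ObjectProperty.hom_ext _ (hwf f.hom hpi))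
             (fun {A} g' hg' => ⟨ObjectProperty.homMk (l ≫ (E.isCokernel hkp g'.hom (congrArg InducedCategory.Hom.hom hg')).choose : Y.obj ⟶ A.obj), ObjectProperty.hom_ext _ (key g'.hom (congrArg InducedCategory.Hom.hom hg') f.hom hpi)⟩) }⟩

noncomputable def goodAbelian (hwic : E.WeaklyIdempotentComplete) :
    Abelian (ObjectProperty.FullSubcategory E.GoodTarget) := by
  haveI := E.hasZeroObject_good
  haveI := E.hasBinaryBiproducts_good hwic
  haveI := E.hasKernels_good hwic
  haveI := E.hasCokernels_good hwic
  haveI : HasFiniteProducts (ObjectProperty.FullSubcategory E.GoodTarget) :=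
    hasFiniteProducts_of_has_binary_and_terminal
  exact
    { normalMonoOfMono := fun f _ => E.normalMono_good hwic f
      normalEpiOfEpi := fun f _ => E.normalEpi_good hwic f }

end Subcat

end ExactStructure

/-- **(Proposition, `C'` is a wide subcategory.)** Let `C` be a weakly idempotent
complete exact category and `C'` the full subcategory of objects `X` such that every
morphism of `C` with target `X` is admissible. Then `C'` is closed under extensions,
`C'` (with the exact structure inherited from `C`) is an abelian category, and the
inclusion `C' → C` is exact: the short exact sequences of `C'` (equivalently, its
kernel-cokernel pairs) are exactly the conflations of `C` with all terms in `C'`.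
In particular `C'` is a wide subcategory of `C`. -/
theorem goodTarget_is_wide (E : ExactStructure C)
    (hwic : E.WeaklyIdempotentComplete) :
    (∀ {L M N : C} (f : L ⟶ M) (g : M ⟶ N), E.IsConflation f g →
      E.GoodTarget L → E.GoodTarget N → E.GoodTarget M) ∧
    Nonempty (Abelian (ObjectProperty.FullSubcategory E.GoodTarget)) ∧
    (∀ (X Y Z : ObjectProperty.FullSubcategory E.GoodTarget) (f : X ⟶ Y) (g : Y ⟶ Z),
      ((f ≫ g = 0) ∧
        (∀ (V : ObjectProperty.FullSubcategory E.GoodTarget) (k : V ⟶ Y), k ≫ g = 0 →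
          ∃! l : V ⟶ X, l ≫ f = k) ∧
        (∀ (V : ObjectProperty.FullSubcategory E.GoodTarget) (k : Y ⟶ V), f ≫ k = 0 →
          ∃! l : Z ⟶ V, g ≫ l = k))
      ↔ E.IsConflation f.hom g.hom) := by
  refine ⟨fun {L M N} f g hc hL hN => E.goodTarget_ext hwic hc hL hN,
    ⟨E.goodAbelian hwic⟩, fun X Y Z f g => ?_⟩
  constructor
  · rintro ⟨h0, hker, hcoker⟩
    obtain ⟨fC, hfC⟩ : ∃ u : X.obj ⟶ Y.obj, u = f.hom := ⟨f.hom, rfl⟩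
    obtain ⟨gC, hgC⟩ : ∃ u : Y.obj ⟶ Z.obj, u = g.hom := ⟨g.hom, rfl⟩
    have h0C : fC ≫ gC = 0 := by rw [hfC, hgC]; exact congrArg InducedCategory.Hom.hom h0
    have hkerC : ∀ (V : C) (hV : E.GoodTarget V) (k : V ⟶ Y.obj), k ≫ gC = 0 →
        ∃! l : V ⟶ X.obj, l ≫ fC = k := by
      intro V hV k hk
      rw [hgC] at hk
      obtain ⟨l, hl, hu⟩ := hker ⟨V, hV⟩ (ObjectProperty.homMk k) (ObjectProperty.hom_ext _ hk)
      refine ⟨l.hom, ?_, fun y hy => ?_⟩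
      · rw [hfC]; exact congrArg InducedCategory.Hom.hom hl
      · exact congrArg InducedCategory.Hom.hom (hu (ObjectProperty.homMk y) (ObjectProperty.hom_ext _ (by rw [hfC] at hy; exact hy)))
    have hcokerC : ∀ (V : C) (hV : E.GoodTarget V) (k : Y.obj ⟶ V), fC ≫ k = 0 →
        ∃! l : Z.obj ⟶ V, gC ≫ l = k := by
      intro V hV k hk
      rw [hfC] at hk
      obtain ⟨l, hl, hu⟩ := hcoker ⟨V, hV⟩ (ObjectProperty.homMk k) (ObjectProperty.hom_ext _ hk)
      refine ⟨l.hom, ?_, fun y hy => ?_⟩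
      · rw [hgC]; exact congrArg InducedCategory.Hom.hom hl
      · exact congrArg InducedCategory.Hom.hom (hu (ObjectProperty.homMk y) (ObjectProperty.hom_ext _ (by rw [hgC] at hy; exact hy)))
    -- now work entirely in `C`
    obtain ⟨I2, q, j, hq, hj, hqj⟩ := Z.property gC
    obtain ⟨K, kq, hkq⟩ := id hq
    have hKgood := E.goodTarget_ker hwic hkq Y.property
    have hjmono : Mono j := E.mono_of_inflation hj
    have hkqmono : Mono kq := E.mono_of_inflation ⟨_, _, hkq⟩
    have hqepi : Epi q := E.epi_of_deflation hq
    have hkqg : kq ≫ gC = 0 := by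
      rw [← hqj, ← assoc, E.comp_zero hkq, Limits.zero_comp]
    obtain ⟨l, hl, -⟩ := hkerC K hKgood kq hkqg
    have hfq : fC ≫ q = 0 := by
      rw [← cancel_mono j, assoc, hqj, h0C, Limits.zero_comp]
    obtain ⟨s, hs, -⟩ := E.isKernel hkq fC hfq
    have hls : l ≫ s = 𝟙 K := by
      rw [← cancel_mono kq, assoc, hs, hl, id_comp]
    have hsl : s ≫ l = 𝟙 X.obj := by
      obtain ⟨t, ht, hu⟩ := hkerC X.obj X.property fC h0C
      rw [hu (s ≫ l) (show (s ≫ l) ≫ fC = fC by rw [assoc, hl, hs]),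
        hu (𝟙 X.obj) (show 𝟙 X.obj ≫ fC = fC by rw [id_comp])]
    have hconfq : E.IsConflation fC q :=
      E.conflation_iso (Iso.mk l s hls hsl) (Iso.refl _) (Iso.refl _) hkq
        (by simpa using hl.symm) (by simp)
    have hI2good := E.goodTarget_coker hwic hconfq Y.property
    obtain ⟨t, ht, -⟩ := hcokerC I2 hI2good q hfq
    have hjt : j ≫ t = 𝟙 I2 := by
      rw [← cancel_epi q, ← assoc, hqj, ht, comp_id]
    have htj : t ≫ j = 𝟙 Z.obj := by
      obtain ⟨t2, ht2, hu2⟩ := hcokerC Z.obj Z.property gC (by rw [h0C])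
      rw [hu2 (t ≫ j) (show gC ≫ t ≫ j = gC by rw [← assoc, ht, hqj]),
          hu2 (𝟙 Z.obj) (show gC ≫ 𝟙 Z.obj = gC by rw [comp_id])]
    have result : E.IsConflation fC gC :=
      E.conflation_iso (Iso.refl _) (Iso.refl _) (Iso.mk j t hjt htj) hconfq
        (by simp) (by simpa using hqj)
    exact hfC ▸ hgC ▸ result
  · intro hconf
    exact ⟨ObjectProperty.hom_ext _ (E.comp_zero hconf),
      fun V k hk => by
        obtain ⟨l, hl, hu⟩ := E.isKernel hconf k.hom (congrArg InducedCategory.Hom.hom hk)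
        exact ⟨ObjectProperty.homMk l, ObjectProperty.hom_ext _ hl, fun y hy => ObjectProperty.hom_ext _ (hu y.hom (congrArg InducedCategory.Hom.hom hy))⟩,
      fun V k hk => by
        obtain ⟨l, hl, hu⟩ := E.isCokernel hconf k.hom (congrArg InducedCategory.Hom.hom hk)
        exact ⟨ObjectProperty.homMk l, ObjectProperty.hom_ext _ hl, fun y hy => ObjectProperty.hom_ext _ (hu y.hom (congrArg InducedCategory.Hom.hom hy))⟩⟩
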